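/- Dual Orlicz-Minkowski inequality: Let K, L be star bodies in ℝⁿ and φ : (0,∞) → (0,∞) a continuous positive function such that F(t) = φ(t^{-1/n}) is convex on (0,∞). Then Ṽ_φ(K, L) ≥ |K| · φ(|K|^{1/n} · |L|^{-1/n}). Moreover, if F is strictly convex, equality holds if and only if K and L are dilates of each other. -/

import Mathlib

noncomputable section

open Metric Set MeasureTheory Filter
open Pointwise
open scoped NNReal ENNReal

/-- A star body about the origin in `ℝⁿ`, represented by its radial function,
which is continuous and positive on the unit sphere. -/
structure StarBody (n : ℕ) where
  ρ : EuclideanSpace ℝ (Fin n) → ℝ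
  pos : ∀ u : EuclideanSpace ℝ (Fin n), ‖u‖ = 1 → 0 < ρ u
  cont : ContinuousOn ρ (sphere (0 : EuclideanSpace ℝ (Fin n)) 1)

/-- `M` is the Orlicz `φ`-radial addition `K +̃_φ L`, i.e.
`φ(ρ_M(u)/ρ_K(u), ρ_M(u)/ρ_L(u)) = 1` for all `u` on the unit sphere. -/
def IsOrliczSum {n : ℕ} (φ : ℝ → ℝ → ℝ) (K L M : StarBody n) : Prop :=
  ∀ u : EuclideanSpace ℝ (Fin n), ‖u‖ = 1 →
    φ (M.ρ u / K.ρ u) (M.ρ u / L.ρ u) = 1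

/-- The spherical Lebesgue measure on the unit sphere `S^{n-1}`. -/
def sphereMeasure (n : ℕ) : Measure (sphere (0 : EuclideanSpace ℝ (Fin n)) 1) :=
  (volume : Measure (EuclideanSpace ℝ (Fin n))).toSphere

/-- The volume of a star body via the polar coordinate formula
`|K| = (1/n) ∫_{S^{n-1}} ρ_K(u)ⁿ dσ(u)`. -/
def StarBody.vol {n : ℕ} (K : StarBody n) : ℝ :=
  (1 / (n : ℝ)) * ∫ u : sphere (0 : EuclideanSpace ℝ (Fin n)) 1,
    (K.ρ u) ^ n ∂(sphereMeasure n)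

/-- The Orlicz `L_φ`-dual mixed volume
`Ṽ_φ(K,L) = (1/n) ∫_{S^{n-1}} φ(ρ_K(u)/ρ_L(u)) ρ_K(u)ⁿ dσ(u)`. -/
def dualMixedVolume {n : ℕ} (φ : ℝ → ℝ) (K L : StarBody n) : ℝ :=
  (1 / (n : ℝ)) * ∫ u : sphere (0 : EuclideanSpace ℝ (Fin n)) 1,
    φ (K.ρ u / L.ρ u) * (K.ρ u) ^ n ∂(sphereMeasure n)

/-- Dual Orlicz-Minkowski inequality:
`Ṽ_φ(K,L) ≥ |K| φ(|K|^{1/n} |L|^{-1/n})`, with equality (for strictly convex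
`F(t) = φ(t^{-1/n})`) iff `K` and `L` are dilates of each other. -/
lemma sphereMeasure_openPos {n : ℕ} (hn : 0 < n)
    {s : Set (sphere (0 : EuclideanSpace ℝ (Fin n)) 1)}
    (ho : IsOpen s) (hne : s.Nonempty) : sphereMeasure n s ≠ 0 := by
  obtain ⟨U, hU, rfl⟩ := isOpen_induced_iff.mp ho
  set T : Set (EuclideanSpace ℝ (Fin n)) :=
    {x | ‖x‖ ∈ Ioo (0:ℝ) 1 ∧ ‖x‖⁻¹ • x ∈ U} with hT
  have hTeq : Ioo (0:ℝ) 1 • ((Subtype.val : sphere (0 : EuclideanSpace ℝ (Fin n)) 1 → EuclideanSpace ℝ (Fin n)) '' (Subtype.val ⁻¹' U)) = T := by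
    ext x
    constructor
    · rintro ⟨r, hr, y, ⟨u, hu, rfl⟩, rfl⟩
      have hnu : ‖(u : EuclideanSpace ℝ (Fin n))‖ = 1 := mem_sphere_zero_iff_norm.mp u.2
      have hnorm : ‖r • (u : EuclideanSpace ℝ (Fin n))‖ = r := by
        rw [norm_smul, hnu, mul_one, Real.norm_eq_abs, abs_of_pos hr.1]
      refine ⟨by rw [hnorm]; exact hr, ?_⟩
      rw [hnorm, smul_smul, inv_mul_cancel₀ hr.1.ne', one_smul]
      exact hu
    · rintro ⟨h1, h2⟩
      have hx0 : ‖x‖ ≠ 0 := h1.1.ne'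
      have hy : ‖‖x‖⁻¹ • x‖ = 1 := by
        rw [norm_smul, Real.norm_eq_abs, abs_of_pos (inv_pos.2 h1.1), inv_mul_cancel₀ hx0]
      refine ⟨‖x‖, h1, ‖x‖⁻¹ • x, ⟨⟨_, mem_sphere_zero_iff_norm.mpr hy⟩, h2, rfl⟩, ?_⟩
      show ‖x‖ • ‖x‖⁻¹ • x = x
      rw [smul_smul, mul_inv_cancel₀ hx0, one_smul]
  have hg : ContinuousOn (fun x : EuclideanSpace ℝ (Fin n) => ‖x‖⁻¹ • x) {x | x ≠ 0} :=
    (continuous_norm.continuousOn.inv₀ fun x hx => norm_ne_zero_iff.2 hx).smul continuousOn_id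
  have hW : IsOpen ({x : EuclideanSpace ℝ (Fin n) | x ≠ 0} ∩
      (fun x => ‖x‖⁻¹ • x) ⁻¹' U) :=
    hg.isOpen_inter_preimage isOpen_ne hU
  have hTopen : IsOpen T := by
    have : T = (norm ⁻¹' Ioo (0:ℝ) 1) ∩ ({x : EuclideanSpace ℝ (Fin n) | x ≠ 0} ∩
        (fun x => ‖x‖⁻¹ • x) ⁻¹' U) := by
      ext x
      simp only [hT, mem_setOf_eq, mem_inter_iff, mem_preimage]
      exact ⟨fun ⟨h1, h2⟩ => ⟨h1, norm_ne_zero_iff.1 h1.1.ne', h2⟩, fun ⟨h1, _, h2⟩ => ⟨h1, h2⟩⟩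
    rw [this]
    exact (isOpen_Ioo.preimage continuous_norm).inter hW
  have hTne : T.Nonempty := by
    obtain ⟨u, hu⟩ := hne
    have hnu : ‖(u : EuclideanSpace ℝ (Fin n))‖ = 1 := mem_sphere_zero_iff_norm.mp u.2
    have hx : ‖(2⁻¹ : ℝ) • (u : EuclideanSpace ℝ (Fin n))‖ = 2⁻¹ := by
      rw [norm_smul, hnu, mul_one, Real.norm_eq_abs, abs_of_pos]; norm_num
    refine ⟨(2⁻¹ : ℝ) • (u : EuclideanSpace ℝ (Fin n)), ⟨by rw [hx]; constructor <;> norm_num, ?_⟩⟩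
    rw [hx, smul_smul]
    norm_num
    exact hu
  rw [sphereMeasure, Measure.toSphere_apply' _ ho.measurableSet, hTeq]
  refine mul_ne_zero ?_ (hTopen.measure_pos volume hTne).ne'
  simp [finrank_euclideanSpace_fin, hn.ne']

theorem dual_orlicz_minkowski {n : ℕ} (hn : 0 < n) (φ : ℝ → ℝ)
    (hφc : ContinuousOn φ (Set.Ioi 0)) (hφp : ∀ t : ℝ, 0 < t → 0 < φ t)
    (hF : ConvexOn ℝ (Set.Ioi 0) (fun t : ℝ => φ (t ^ (-(1 : ℝ) / n))))
    (K L : StarBody n) :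
    K.vol * φ (K.vol ^ ((1 : ℝ) / n) * L.vol ^ (-(1 : ℝ) / n)) ≤
      dualMixedVolume φ K L ∧
      (StrictConvexOn ℝ (Set.Ioi 0) (fun t : ℝ => φ (t ^ (-(1 : ℝ) / n))) →
        (dualMixedVolume φ K L =
            K.vol * φ (K.vol ^ ((1 : ℝ) / n) * L.vol ^ (-(1 : ℝ) / n)) ↔
          ∃ lam : ℝ, 0 < lam ∧
            ∀ u : EuclideanSpace ℝ (Fin n), ‖u‖ = 1 → L.ρ u = lam * K.ρ u)) := by
  classical
  have hn' : (n : ℝ) ≠ 0 := Nat.cast_ne_zero.2 hn.ne'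
  haveI : Nontrivial (EuclideanSpace ℝ (Fin n)) :=
    Module.nontrivial_of_finrank_pos (R := ℝ) (by rw [finrank_euclideanSpace_fin]; exact hn)
  haveI : Nonempty (sphere (0 : EuclideanSpace ℝ (Fin n)) 1) :=
    (NormedSpace.sphere_nonempty.mpr zero_le_one).to_subtype
  set S := sphere (0 : EuclideanSpace ℝ (Fin n)) 1 with hSdef
  set σ := sphereMeasure n with hσdef
  haveI hσfin : IsFiniteMeasure σ := by
    rw [hσdef]; unfold sphereMeasure; infer_instance
  set F : ℝ → ℝ := fun t : ℝ => φ (t ^ (-(1 : ℝ) / n)) with hFdef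
  -- radial functions on the sphere
  set fK : S → ℝ := fun u => K.ρ u with hfKdef
  set fL : S → ℝ := fun u => L.ρ u with hfLdef
  have hfKc : Continuous fK := K.cont.restrict
  have hfLc : Continuous fL := L.cont.restrict
  have hfKpos : ∀ u : S, 0 < fK u := fun u => K.pos u (mem_sphere_zero_iff_norm.mp u.2)
  have hfLpos : ∀ u : S, 0 < fL u := fun u => L.pos u (mem_sphere_zero_iff_norm.mp u.2)
  set h : S → ℝ := fun u => (fL u / fK u) ^ n with hhdef
  have hhc : Continuous h := (hfLc.div hfKc fun u => (hfKpos u).ne').pow n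
  have hhpos : ∀ u : S, 0 < h u := fun u => pow_pos (div_pos (hfLpos u) (hfKpos u)) n
  -- the weighted measure
  set w : S → ℝ≥0 := fun u => (fK u ^ n).toNNReal with hwdef
  have hw_meas : Measurable w := (continuous_real_toNNReal.comp (hfKc.pow n)).measurable
  set μ : Measure S := σ.withDensity fun u => (w u : ℝ≥0∞) with hμdef
  have hσuniv : σ (univ : Set S) ≠ 0 := sphereMeasure_openPos hn isOpen_univ univ_nonempty
  haveI : IsFiniteMeasure μ := by
    obtain ⟨u₂, -, hmax⟩ :=
      isCompact_univ.exists_isMaxOn univ_nonempty ((hfKc.pow n).continuousOn)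
    apply isFiniteMeasure_withDensity
    have hle : ∫⁻ u, (w u : ℝ≥0∞) ∂σ ≤ (w u₂ : ℝ≥0∞) * σ univ :=
      le_trans (lintegral_mono fun u =>
          ENNReal.coe_le_coe.2 (Real.toNNReal_le_toNNReal (hmax (mem_univ u))))
        (le_of_eq (lintegral_const _))
    exact ne_top_of_le_ne_top (ENNReal.mul_ne_top ENNReal.coe_ne_top (measure_ne_top _ _)) hle
  have hwne : {x : S | ((w x : ℝ≥0∞)) ≠ 0} = univ := eq_univ_of_forall fun u => by
    have hw0 : w u ≠ 0 := by
      rw [hwdef]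
      simp only [ne_eq, Real.toNNReal_eq_zero, not_le]
      exact pow_pos (hfKpos u) n
    simpa [ne_eq, ENNReal.coe_eq_zero] using hw0
  haveI : NeZero μ := by
    constructor
    intro h0
    have h1 : μ univ = 0 := by rw [h0]; simp
    rw [hμdef, withDensity_apply_eq_zero (f := fun u => ((w u : ℝ≥0∞))) (measurable_coe_nnreal_ennreal.comp hw_meas)] at h1
    rw [hwne, univ_inter] at h1
    exact hσuniv h1
  -- transfer of integrals
  have transfer : ∀ g : S → ℝ, ∫ u, g u ∂μ = ∫ u, fK u ^ n * g u ∂σ := by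
    intro g
    rw [hμdef, integral_withDensity_eq_integral_smul hw_meas]
    refine integral_congr_ae (Eventually.of_forall fun u => ?_)
    show w u • g u = fK u ^ n * g u
    rw [NNReal.smul_def, Real.coe_toNNReal _ (pow_nonneg (hfKpos u).le n), smul_eq_mul]
  -- integrability
  have hint : ∀ f : S → ℝ, Continuous f → Integrable f σ := fun f hf =>
    hf.integrable_of_hasCompactSupport (isClosed_tsupport f).isCompact
  have hintμ : ∀ f : S → ℝ, Continuous f → Integrable f μ := fun f hf =>
    hf.integrable_of_hasCompactSupport (isClosed_tsupport f).isCompact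
  -- total mass
  have hμuniv : (μ univ).toReal = ∫ u, fK u ^ n ∂σ := by
    have h1 : ∫ _, (1 : ℝ) ∂μ = (μ univ).toReal := by simp; rfl
    have h2 := transfer fun _ => (1 : ℝ)
    rw [h1] at h2
    simpa using h2
  -- values of the integrals
  have hIK : K.vol = (1 / (n : ℝ)) * ∫ u, fK u ^ n ∂σ := rfl
  have hIL : L.vol = (1 / (n : ℝ)) * ∫ u, fL u ^ n ∂σ := rfl
  have hIpos : ∀ f : S → ℝ, Continuous f → (∀ u, 0 < f u) → 0 < ∫ u, f u ∂σ := by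
    intro f hf hfp
    obtain ⟨u₁, -, hmin⟩ := isCompact_univ.exists_isMinOn univ_nonempty hf.continuousOn
    have h0 : 0 < (σ univ).toReal := ENNReal.toReal_pos hσuniv (measure_ne_top _ _)
    calc (0:ℝ) < (σ univ).toReal • f u₁ := smul_pos h0 (hfp u₁)
      _ = ∫ _, f u₁ ∂σ := (integral_const _).symm
      _ ≤ ∫ u, f u ∂σ := integral_mono (integrable_const _) (hint f hf) fun u => hmin (mem_univ u)
  have hKvol : 0 < K.vol := by
    rw [hIK]
    exact mul_pos (by positivity) (hIpos _ (hfKc.pow n) fun u => pow_pos (hfKpos u) n)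
  have hLvolpos : 0 < L.vol := by
    rw [hIL]
    exact mul_pos (by positivity) (hIpos _ (hfLc.pow n) fun u => pow_pos (hfLpos u) n)
  have hinth : ∫ u, h u ∂μ = ∫ u, fL u ^ n ∂σ := by
    rw [transfer]
    refine integral_congr_ae (Eventually.of_forall fun u => ?_)
    show fK u ^ n * (fL u / fK u) ^ n = fL u ^ n
    rw [div_pow, mul_comm, div_mul_cancel₀ _ (pow_ne_zero n (hfKpos u).ne')]
  have havg : ⨍ u, h u ∂μ = L.vol / K.vol := by
    rw [average_eq, smul_eq_mul, measureReal_def, hμuniv, hinth, hIK, hIL]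
    field_simp
  have hFh : ∀ u : S, F (h u) = φ (fK u / fL u) := by
    intro u
    have hx : 0 < fL u / fK u := div_pos (hfLpos u) (hfKpos u)
    show φ (((fL u / fK u) ^ n) ^ (-(1 : ℝ) / n)) = _
    rw [← Real.rpow_natCast (fL u / fK u) n, ← Real.rpow_mul hx.le,
      show (n : ℝ) * (-(1 : ℝ) / n) = -1 by field_simp,
      Real.rpow_neg_one, inv_div]
  have hintFh : ∫ u, F (h u) ∂μ = (n : ℝ) * dualMixedVolume φ K L := by
    rw [transfer]
    have heq : ∫ u, fK u ^ n * F (h u) ∂σ = ∫ u, φ (fK u / fL u) * fK u ^ n ∂σ :=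
      integral_congr_ae (Eventually.of_forall fun u => by
        show fK u ^ n * F (h u) = φ (fK u / fL u) * fK u ^ n
        rw [hFh u]; ring)
    rw [heq]
    show _ = (n : ℝ) * ((1 / (n : ℝ)) * ∫ u, φ (fK u / fL u) * fK u ^ n ∂σ)
    field_simp
  have havgFh : ⨍ u, F (h u) ∂μ = dualMixedVolume φ K L / K.vol := by
    rw [average_eq, smul_eq_mul, measureReal_def, hμuniv, hintFh, hIK]
    field_simp
  have hFval : F (L.vol / K.vol) =
      φ (K.vol ^ ((1 : ℝ) / n) * L.vol ^ (-(1 : ℝ) / n)) := by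
    show φ ((L.vol / K.vol) ^ (-(1 : ℝ) / n)) = _
    rw [Real.div_rpow hLvolpos.le hKvol.le]
    rw [div_eq_mul_inv, ← Real.rpow_neg hKvol.le, neg_div, neg_neg, mul_comm]
  -- bounds for Jensen
  obtain ⟨u₁, -, hminh⟩ := isCompact_univ.exists_isMinOn univ_nonempty hhc.continuousOn
  obtain ⟨u₂, -, hmaxh⟩ := isCompact_univ.exists_isMaxOn univ_nonempty hhc.continuousOn
  have hsub : Icc (h u₁) (h u₂) ⊆ Ioi (0 : ℝ) := fun x hx => lt_of_lt_of_le (hhpos u₁) hx.1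
  have hmem : ∀ᵐ u ∂μ, h u ∈ Icc (h u₁) (h u₂) :=
    Eventually.of_forall fun u => ⟨hminh (mem_univ u), hmaxh (mem_univ u)⟩
  have hFcont : ContinuousOn F (Ioi 0) := by
    have h1 : ContinuousOn (fun t : ℝ => t ^ (-(1 : ℝ) / n)) (Ioi 0) := fun t ht =>
      (Real.continuousAt_rpow_const t _ (Or.inl (ne_of_gt ht))).continuousWithinAt
    exact hφc.comp h1 fun t ht => mem_Ioi.2 (Real.rpow_pos_of_pos ht _)
  have hInt_h : Integrable h μ := hintμ h hhc
  have hInt_Fh : Integrable (F ∘ h) μ := by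
    have : F ∘ h = fun u => φ (fK u / fL u) := funext hFh
    rw [this]
    refine hintμ _ (hφc.comp_continuous (hfKc.div hfLc fun u => (hfLpos u).ne') ?_)
    exact fun u => mem_Ioi.2 (div_pos (hfKpos u) (hfLpos u))
  have jensen := (hF.subset hsub (convex_Icc _ _)).map_average_le (hFcont.mono hsub)
    isClosed_Icc hmem hInt_h hInt_Fh
  rw [havg, havgFh, hFval] at jensen
  have main : K.vol * φ (K.vol ^ ((1 : ℝ) / n) * L.vol ^ (-(1 : ℝ) / n)) ≤
      dualMixedVolume φ K L := by
    have := (le_div_iff₀ hKvol).1 jensen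
    linarith [this]
  refine ⟨main, fun hSF => ⟨fun heq => ?_, fun hdil => ?_⟩⟩
  · -- equality implies dilates
    rcases (hSF.subset hsub (convex_Icc _ _)).ae_eq_const_or_map_average_lt
        (hFcont.mono hsub) isClosed_Icc hmem hInt_h hInt_Fh with hae | hlt
    · set c := L.vol / K.vol with hcdef
      rw [havg] at hae
      have hcall : ∀ u : S, h u = c := by
        by_contra hcon
        push_neg at hcon
        obtain ⟨u₀, hu₀⟩ := hcon
        have hopen : IsOpen {u : S | h u ≠ c} :=
          (isClosed_eq hhc continuous_const).isOpen_compl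
        have hμ0 : μ {u : S | h u ≠ c} = 0 := by
          have := hae
          rw [Filter.EventuallyEq, ae_iff] at this
          exact this
        rw [hμdef, withDensity_apply_eq_zero (f := fun u => ((w u : ℝ≥0∞)))
            (measurable_coe_nnreal_ennreal.comp hw_meas), hwne, univ_inter] at hμ0
        exact sphereMeasure_openPos hn hopen ⟨u₀, hu₀⟩ hμ0
      have hc_pos : 0 < c := (hcall u₁) ▸ hhpos u₁
      refine ⟨c ^ ((1 : ℝ) / n), Real.rpow_pos_of_pos hc_pos _, fun u hu => ?_⟩
      set u' : S := (⟨u, mem_sphere_zero_iff_norm.mpr hu⟩ : S)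
      have hx : 0 < fL u' / fK u' := div_pos (hfLpos u') (hfKpos u')
      have hroot : fL u' / fK u' = c ^ ((1 : ℝ) / n) := by
        rw [← hcall u']
        show fL u' / fK u' = ((fL u' / fK u') ^ n) ^ ((1 : ℝ) / n)
        rw [← Real.rpow_natCast (fL u' / fK u') n, ← Real.rpow_mul hx.le,
          show (n : ℝ) * ((1 : ℝ) / n) = 1 by field_simp, Real.rpow_one]
      exact (div_eq_iff (hfKpos u').ne').1 hroot
    · exfalso
      rw [havg, havgFh, hFval] at hlt
      have := (lt_div_iff₀ hKvol).1 hlt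
      rw [heq] at this
      linarith [this]
  · -- dilates implies equality
    obtain ⟨lam, hlam, hdil'⟩ := hdil
    have hLK : ∀ u : S, fL u = lam * fK u := fun u =>
      hdil' u (mem_sphere_zero_iff_norm.mp u.2)
    have hLvol : L.vol = lam ^ n * K.vol := by
      have heq : ∫ u, fL u ^ n ∂σ = ∫ u, lam ^ n * fK u ^ n ∂σ :=
        integral_congr_ae (Eventually.of_forall fun u => by
          show fL u ^ n = lam ^ n * fK u ^ n
          rw [hLK u, mul_pow])
      rw [hIL, hIK, heq, integral_const_mul]
      ring
    have hdual : dualMixedVolume φ K L = K.vol * φ lam⁻¹ := by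
      have heq : ∫ u, φ (fK u / fL u) * fK u ^ n ∂σ = ∫ u, φ lam⁻¹ * fK u ^ n ∂σ :=
        integral_congr_ae (Eventually.of_forall fun u => by
          show φ (fK u / fL u) * fK u ^ n = φ lam⁻¹ * fK u ^ n
          rw [hLK u, mul_comm lam, div_mul_eq_div_div, div_self (hfKpos u).ne', one_div])
      show (1 / (n : ℝ)) * ∫ u, φ (fK u / fL u) * fK u ^ n ∂σ = _
      rw [heq, integral_const_mul, hIK]
      ring
    have hexp : K.vol ^ ((1 : ℝ) / n) * L.vol ^ (-(1 : ℝ) / n) = lam⁻¹ := by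
      rw [hLvol, Real.mul_rpow (pow_nonneg hlam.le n) hKvol.le]
      rw [show ((lam ^ n : ℝ)) ^ (-(1 : ℝ) / n) = lam⁻¹ from by
        rw [← Real.rpow_natCast lam n, ← Real.rpow_mul hlam.le,
          show (n : ℝ) * (-(1 : ℝ) / n) = -1 by field_simp, Real.rpow_neg_one]]
      rw [show K.vol ^ ((1 : ℝ) / n) * (lam⁻¹ * K.vol ^ (-(1 : ℝ) / n))
            = lam⁻¹ * (K.vol ^ ((1 : ℝ) / n) * K.vol ^ (-(1 : ℝ) / n)) from by ring]
      rw [← Real.rpow_add hKvol, show (1 : ℝ) / n + -(1 : ℝ) / n = 0 by ring,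
        Real.rpow_zero, mul_one]
    rw [hexp, hdual]
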